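/- arXiv:1907.01888 — 4 statements merged into one kernel-verified Lean document; each statement's English description precedes it below -/
import Mathlib

section
/- If f : ℝ → ℝ is continuous with F(u) = ∫₀ᵘ f(s) ds, and there exists μ > 2 such that (1/μ) f(u)u ≥ F(u) > 0 for all u ≠ 0, then there exist constants c₁, c₂ > 0 such that F(t) ≥ c₁|t|^μ − c₂|t|² for all t ∈ ℝ. -/
theorem stmt1 (f : ℝ → ℝ) (hf : Continuous f)
    (F : ℝ → ℝ) (hF : ∀ u : ℝ, F u = ∫ s in (0:ℝ)..u, f s)
    (μ : ℝ) (hμ : 2 < μ)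
    (hAR : ∀ u : ℝ, u ≠ 0 → (1 / μ) * (f u * u) ≥ F u ∧ F u > 0) :
    ∃ c₁ > (0:ℝ), ∃ c₂ > (0:ℝ), ∀ t : ℝ, F t ≥ c₁ * |t| ^ μ - c₂ * |t| ^ (2:ℝ) := by
  have hμ0 : (0:ℝ) < μ := by linarith
  have hFeq : F = fun u => ∫ s in (0:ℝ)..u, f s := funext hF
  have hFd : ∀ x : ℝ, HasDerivAt F (f x) x := by
    intro x
    rw [hFeq]
    exact intervalIntegral.integral_hasDerivAt_right
      (hf.intervalIntegrable 0 x)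
      (hf.stronglyMeasurableAtFilter _ _) hf.continuousAt
  have hFcont : Continuous F := by
    exact continuous_iff_continuousAt.2 fun x => (hFd x).continuousAt
  have hF0 : F 0 = 0 := by rw [hF]; simp
  have hFnonneg : ∀ t : ℝ, 0 ≤ F t := by
    intro t
    rcases eq_or_ne t 0 with h | h
    · rw [h, hF0]
    · exact (hAR t h).2.le
  have hARμ : ∀ u : ℝ, u ≠ 0 → μ * F u ≤ f u * u := by
    intro u hu
    have h := (hAR u hu).1
    have := mul_le_mul_of_nonneg_left h hμ0.le
    calc μ * F u ≤ μ * ((1/μ) * (f u * u)) := this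
      _ = f u * u := by field_simp
  -- Positive side
  have hpos : ∀ t : ℝ, 1 ≤ t → F 1 * t ^ μ ≤ F t := by
    intro t ht
    set g : ℝ → ℝ := fun t => F t * t ^ (-μ) with hg
    have hder : ∀ x : ℝ, 0 < x →
        HasDerivAt g (f x * x ^ (-μ) + F x * (-μ * x ^ (-μ - 1))) x := by
      intro x hx
      exact (hFd x).mul (Real.hasDerivAt_rpow_const (Or.inl hx.ne'))
    have hmono : MonotoneOn g (Set.Ici 1) := by
      apply monotoneOn_of_deriv_nonneg (convex_Ici 1)
      · apply ContinuousOn.mul hFcont.continuousOn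
        intro x hx
        exact (Real.continuousAt_rpow_const x (-μ)
          (Or.inl (by exact ne_of_gt (lt_of_lt_of_le one_pos hx)))).continuousWithinAt
      · intro x hx
        rw [interior_Ici] at hx
        have hx0 : (0:ℝ) < x := lt_trans one_pos hx
        exact (hder x hx0).differentiableAt.differentiableWithinAt
      · intro x hx
        rw [interior_Ici] at hx
        have hx0 : (0:ℝ) < x := lt_trans one_pos hx
        rw [(hder x hx0).deriv]
        have hxp : (0:ℝ) < x ^ (-μ - 1) := Real.rpow_pos_of_pos hx0 _
        have hsplit : x ^ (-μ) = x * x ^ (-μ - 1) := by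
          have h1 : x ^ (-μ) = x ^ (1 + (-μ - 1)) := by ring_nf
          rw [h1, Real.rpow_add hx0, Real.rpow_one]
        have hfx : μ * F x ≤ f x * x := hARμ x hx0.ne'
        have : f x * x ^ (-μ) = f x * x * x ^ (-μ - 1) := by rw [hsplit]; ring
        rw [this]
        nlinarith [mul_le_mul_of_nonneg_right hfx hxp.le]
    have h1 : g 1 ≤ g t := hmono (by simp) (by exact ht) ht
    have hone : (1:ℝ) ^ (-μ) = 1 := Real.one_rpow _
    have ht0 : (0:ℝ) < t := lt_of_lt_of_le one_pos ht
    have hμt : (0:ℝ) < t ^ μ := Real.rpow_pos_of_pos ht0 _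
    have : F 1 ≤ F t * t ^ (-μ) := by simpa [hg, hone] using h1
    have := mul_le_mul_of_nonneg_right this hμt.le
    calc F 1 * t ^ μ ≤ F t * t ^ (-μ) * t ^ μ := this
      _ = F t := by
          rw [mul_assoc, ← Real.rpow_add ht0]
          simp
  -- Negative side
  have hneg : ∀ t : ℝ, t ≤ -1 → F (-1) * (-t) ^ μ ≤ F t := by
    intro t ht
    set g : ℝ → ℝ := fun t => F t * (-t) ^ (-μ) with hg
    have hder : ∀ x : ℝ, x < 0 →
        HasDerivAt g (f x * (-x) ^ (-μ) + F x * (-1 * (-μ) * (-x) ^ (-μ - 1))) x := by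
      intro x hx
      have hneg : HasDerivAt (fun y : ℝ => -y) (-1) x := (hasDerivAt_id x).neg
      have := hneg.rpow_const (p := -μ) (Or.inl (by simpa using hx.ne))
      exact (hFd x).mul (by simpa using this)
    have hanti : AntitoneOn g (Set.Iic (-1)) := by
      apply antitoneOn_of_deriv_nonpos (convex_Iic (-1))
      · apply ContinuousOn.mul hFcont.continuousOn
        apply ContinuousOn.rpow_const continuous_neg.continuousOn
        · intro x hx
          left
          have : x < 0 := lt_of_le_of_lt hx (by norm_num)
          simpa using this.ne
      · intro x hx
        rw [interior_Iic] at hx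
        have hx0 : x < 0 := lt_trans hx (by norm_num)
        exact (hder x hx0).differentiableAt.differentiableWithinAt
      · intro x hx
        rw [interior_Iic] at hx
        have hx0 : x < 0 := lt_trans hx (by norm_num)
        rw [(hder x hx0).deriv]
        have hxpos : (0:ℝ) < -x := by linarith
        have hxp : (0:ℝ) < (-x) ^ (-μ - 1) := Real.rpow_pos_of_pos hxpos _
        have hsplit : (-x) ^ (-μ) = (-x) * (-x) ^ (-μ - 1) := by
          have h1 : (-x) ^ (-μ) = (-x) ^ (1 + (-μ - 1)) := by ring_nf
          rw [h1, Real.rpow_add hxpos, Real.rpow_one]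
        have hfx : μ * F x ≤ f x * x := hARμ x hx0.ne
        have : f x * (-x) ^ (-μ) = -(f x * x) * (-x) ^ (-μ - 1) := by rw [hsplit]; ring
        rw [this]
        nlinarith [mul_le_mul_of_nonneg_right hfx hxp.le]
    have h1 : g t ≥ g (-1) := hanti (by exact ht) (by simp) ht
    have hone : (-(-1:ℝ)) ^ (-μ) = 1 := by norm_num
    have ht0 : (0:ℝ) < -t := by linarith
    have hμt : (0:ℝ) < (-t) ^ μ := Real.rpow_pos_of_pos ht0 _
    have : F (-1) ≤ F t * (-t) ^ (-μ) := by simpa [hg, hone] using h1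
    have := mul_le_mul_of_nonneg_right this hμt.le
    calc F (-1) * (-t) ^ μ ≤ F t * (-t) ^ (-μ) * (-t) ^ μ := this
      _ = F t := by
          rw [mul_assoc, ← Real.rpow_add ht0]
          simp
  -- Assemble
  have hF1 : 0 < F 1 := (hAR 1 one_ne_zero).2
  have hFm1 : 0 < F (-1) := (hAR (-1) (by norm_num)).2
  set c : ℝ := min (F 1) (F (-1)) with hc
  have hc0 : 0 < c := lt_min hF1 hFm1
  refine ⟨c, hc0, c, hc0, fun t => ?_⟩
  rcases le_or_gt |t| 1 with hle | hlt
  · -- small t: RHS ≤ 0 ≤ F t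
    have habs : (0:ℝ) ≤ |t| := abs_nonneg t
    have hrpow : |t| ^ μ ≤ |t| ^ (2:ℝ) := by
      rcases eq_or_lt_of_le habs with h0 | h0
      · rw [← h0, Real.zero_rpow hμ0.ne', Real.zero_rpow (by norm_num)]
      · exact Real.rpow_le_rpow_of_exponent_ge h0 hle hμ.le
    have : c * |t| ^ μ - c * |t| ^ (2:ℝ) ≤ 0 := by nlinarith
    linarith [hFnonneg t]
  · -- |t| > 1
    have hkey : c * |t| ^ μ ≤ F t := by
      rcases le_or_gt 0 t with h0 | h0
      · rw [abs_of_nonneg h0] at hlt ⊢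
        calc c * t ^ μ ≤ F 1 * t ^ μ := by
              exact mul_le_mul_of_nonneg_right (min_le_left _ _)
                (Real.rpow_pos_of_pos (lt_trans one_pos hlt) μ).le
          _ ≤ F t := hpos t hlt.le
      · rw [abs_of_neg h0] at hlt ⊢
        calc c * (-t) ^ μ ≤ F (-1) * (-t) ^ μ := by
              exact mul_le_mul_of_nonneg_right (min_le_right _ _)
                (Real.rpow_pos_of_pos (lt_trans one_pos hlt) μ).le
          _ ≤ F t := hneg t (by linarith)
    have h2 : 0 ≤ c * |t| ^ (2:ℝ) :=
      mul_nonneg hc0.le (Real.rpow_nonneg (abs_nonneg t) _)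
    linarith
end

section
/- Let μ > 2 and define V : ℝ³ → ℝ by V(x) = ln(1+|x|²) − |x|²/(1+|x|²) + (μ+2)/(μ−2). Then V is continuous and bounded below by a positive constant, V(x) → ∞ as |x| → ∞, and ((μ−2)/2) V(x) − (∇V(x), x) ≥ 0 for all x ∈ ℝ³. -/
open RealInnerProductSpace

lemma key_log (t : ℝ) (ht : 0 ≤ t) : t / (1 + t) ≤ Real.log (1 + t) := by
  have h1 : (0:ℝ) < 1 + t := by linarith
  have := Real.log_le_sub_one_of_pos (x := 1/(1+t)) (by positivity)
  rw [Real.log_div one_ne_zero (ne_of_gt h1), Real.log_one] at this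
  have : -Real.log (1+t) ≤ 1/(1+t) - 1 := by linarith
  have h2 : 1/(1+t) - 1 = -(t/(1+t)) := by field_simp; ring
  linarith [h2 ▸ this]

lemma grad_lemma (V : EuclideanSpace ℝ (Fin 3) → ℝ) (C : ℝ)
    (hV : ∀ x, V x = Real.log (1 + ‖x‖ ^ 2) - ‖x‖ ^ 2 / (1 + ‖x‖ ^ 2) + C)
    (x : EuclideanSpace ℝ (Fin 3)) :
    HasGradientAt V ((2 * (‖x‖^2 / (1 + ‖x‖^2)^2)) • x) x := by
  set t := ‖x‖^2 with hts
  have ht : 0 ≤ t := by positivity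
  have h1 : (0:ℝ) < 1 + t := by linarith
  -- deriv of real function φ s = log(1+s) - s/(1+s) + C
  have hφ : HasDerivAt (fun s : ℝ => Real.log (1 + s) - s / (1 + s) + C)
      (t / (1 + t)^2) t := by
    have hd1 : HasDerivAt (fun s : ℝ => Real.log (1 + s)) (1/(1+t)) t := by
      have := ((hasDerivAt_id t).const_add 1).log (ne_of_gt h1)
      simpa using this
    have hd2 : HasDerivAt (fun s : ℝ => s / (1 + s)) (1/(1+t)^2) t := by
      have := (hasDerivAt_id t).div ((hasDerivAt_id t).const_add 1) (ne_of_gt h1)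
      exact this.congr_deriv (by simp only [id]; ring)
    have := (hd1.sub hd2).add_const C
    exact this.congr_deriv (by
      rw [div_sub_div _ _ h1.ne' (pow_ne_zero 2 h1.ne'), div_eq_div_iff (mul_ne_zero h1.ne' (pow_ne_zero 2 h1.ne')) (pow_ne_zero 2 h1.ne')]
      ring)
  -- fderiv of norm sq
  have hns : HasFDerivAt (fun y : EuclideanSpace ℝ (Fin 3) => ‖y‖^2)
      (2 • (innerSL ℝ x)) x := by
    simpa using (hasFDerivAt_id x).norm_sq
  have hcomp := hφ.comp_hasFDerivAt x hns
  rw [hasGradientAt_iff_hasFDerivAt]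
  have heq : (fun y : EuclideanSpace ℝ (Fin 3) =>
      Real.log (1 + ‖y‖^2) - ‖y‖^2 / (1 + ‖y‖^2) + C) = V := by
    funext y; rw [hV y]
  rw [← heq]
  refine hcomp.congr_fderiv ?_
  ext y
  simp [InnerProductSpace.toDual, real_inner_smul_left, real_inner_comm]
  ring

theorem stmt3 (μ : ℝ) (hμ : 2 < μ)
    (V : EuclideanSpace ℝ (Fin 3) → ℝ)
    (hV : ∀ x, V x = Real.log (1 + ‖x‖ ^ 2) - ‖x‖ ^ 2 / (1 + ‖x‖ ^ 2) + (μ + 2) / (μ - 2)) :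
    Continuous V ∧
    (∃ c : ℝ, 0 < c ∧ ∀ x, c ≤ V x) ∧
    (∀ M : ℝ, ∃ R : ℝ, ∀ x : EuclideanSpace ℝ (Fin 3), R ≤ ‖x‖ → M ≤ V x) ∧
    (∀ x : EuclideanSpace ℝ (Fin 3),
      0 ≤ ((μ - 2) / 2) * V x - ⟪gradient V x, x⟫) := by
  have hμ2 : (0:ℝ) < μ - 2 := by linarith
  have hC : 0 < (μ + 2) / (μ - 2) := by positivity
  have hpos : ∀ x : EuclideanSpace ℝ (Fin 3),
      0 ≤ Real.log (1 + ‖x‖^2) - ‖x‖^2 / (1 + ‖x‖^2) := by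
    intro x
    have := key_log (‖x‖^2) (by positivity)
    linarith
  refine ⟨?_, ⟨(μ + 2) / (μ - 2), hC, ?_⟩, ?_, ?_⟩
  · have heq : V = fun x => Real.log (1 + ‖x‖^2) - ‖x‖^2 / (1 + ‖x‖^2) + (μ+2)/(μ-2) :=
      funext hV
    rw [heq]
    have h1 : ∀ x : EuclideanSpace ℝ (Fin 3), (0:ℝ) < 1 + ‖x‖^2 := fun x => by positivity
    have hlogc : Continuous fun x : EuclideanSpace ℝ (Fin 3) => Real.log (1 + ‖x‖^2) :=
      (continuous_const.add (continuous_norm.pow 2)).log (fun x => ne_of_gt (h1 x))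
    exact (hlogc.sub
      ((continuous_norm.pow 2).div (continuous_const.add (continuous_norm.pow 2))
        (fun x => ne_of_gt (h1 x)))).add continuous_const
  · intro x; rw [hV x]; linarith [hpos x]
  · intro M
    refine ⟨Real.exp (M + 1) + 1, fun x hx => ?_⟩
    rw [hV x]
    have h1 : (0:ℝ) < 1 + ‖x‖^2 := by positivity
    have hfrac : ‖x‖^2 / (1 + ‖x‖^2) ≤ 1 := by
      rw [div_le_one h1]; linarith
    have hxe : Real.exp (M+1) ≤ ‖x‖ := by have := Real.exp_pos (M+1); linarith
    have h1x : 1 ≤ ‖x‖ := le_trans (by have := Real.exp_pos (M+1); nlinarith [Real.add_one_le_exp (M+1)]) hx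
    have hlog : M + 1 ≤ Real.log (1 + ‖x‖^2) := by
      rw [← Real.log_exp (M+1)]
      apply Real.log_le_log (Real.exp_pos _)
      nlinarith
    linarith
  · intro x
    have hg := (grad_lemma V ((μ+2)/(μ-2)) hV x).gradient
    rw [hg, real_inner_smul_left, real_inner_self_eq_norm_sq, hV x]
    set t := ‖x‖^2 with hts
    have ht : 0 ≤ t := by positivity
    have h1 : (0:ℝ) < 1 + t := by linarith
    have hlogpos : 0 ≤ Real.log (1+t) - t/(1+t) := by
      have := key_log t ht; linarith
    have hc1 : ((μ-2)/2) * ((μ+2)/(μ-2)) = (μ+2)/2 := by field_simp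
    have hfb : 2 * (t / (1+t)^2) * t ≤ 2 := by
      have h2 : t / (1+t)^2 * t ≤ 1 := by
        rw [div_mul_eq_mul_div, div_le_one (by positivity)]
        nlinarith
      nlinarith [h2]
    have hVlb : ((μ-2)/2) * (Real.log (1+t) - t/(1+t) + (μ+2)/(μ-2)) ≥ (μ+2)/2 := by
      have h2 : ((μ-2)/2) * (Real.log (1+t) - t/(1+t)) ≥ 0 := by positivity
      nlinarith [hc1]
    have : (2:ℝ) ≤ (μ+2)/2 := by linarith
    linarith
end

section
/- Let E be a Hilbert space, I ∈ C¹(E, ℝ), and A : E → E a map such that for each u ∈ E, v = A(u) satisfies (u − v, φ)_E + b K(u) ∫∇(u−v)·∇φ = ⟨I'(u), φ⟩ for all φ ∈ E, where K(u) = ∫|∇u|² ≤ (1/a)‖u‖_E². Then ⟨I'(u), u − A(u)⟩ ≥ ‖u − A(u)‖_E² for all u ∈ E, and ‖I'(u)‖ ≤ ‖u − A(u)‖_E (1 + (b/a²)‖u‖_E²). -/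
open RealInnerProductSpace

lemma bilin_cs {E : Type*} [NormedAddCommGroup E] [InnerProductSpace ℝ E]
    (B : E →ₗ[ℝ] E →ₗ[ℝ] ℝ) (hBsymm : ∀ u v : E, B u v = B v u)
    (hBpos : ∀ u : E, 0 ≤ B u u) (w φ : E) :
    (B w φ) ^ 2 ≤ B w w * B φ φ := by
  have h : ∀ t : ℝ, 0 ≤ B φ φ * t ^ 2 + (2 * B w φ) * t + B w w := by
    intro t
    have h0 := hBpos (w + t • φ)
    simp only [map_add, map_smul, LinearMap.add_apply, LinearMap.smul_apply,
      smul_eq_mul] at h0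
    have hs := hBsymm w φ
    have heq : B φ φ * t ^ 2 + (2 * B w φ) * t + B w w
        = B w w + t * B φ w + t * (B w φ + t * B φ φ) := by rw [hs]; ring
    linarith [heq ▸ h0, h0]
  have h' : ∀ x : ℝ, 0 ≤ B φ φ * (x * x) + (2 * B w φ) * x + B w w := by
    intro x; have := h x; nlinarith [this]
  have hd := discrim_le_zero h'
  rw [discrim] at hd
  nlinarith [hd]

theorem stmt8 {E : Type*} [NormedAddCommGroup E] [InnerProductSpace ℝ E] [CompleteSpace E]
    (a b : ℝ) (ha : 0 < a) (hb : 0 < b)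
    (B : E →ₗ[ℝ] E →ₗ[ℝ] ℝ)
    (hBsymm : ∀ u v : E, B u v = B v u)
    (hBpos : ∀ u : E, 0 ≤ B u u)
    (hBbound : ∀ u : E, B u u ≤ (1 / a) * ‖u‖ ^ 2)
    (DI : E → E →L[ℝ] ℝ) (A : E → E)
    (hA : ∀ u φ : E, ⟪u - A u, φ⟫ + b * (B u u) * (B (u - A u) φ) = DI u φ) :
    (∀ u : E, ‖u - A u‖ ^ 2 ≤ DI u (u - A u)) ∧
    (∀ u : E, ‖DI u‖ ≤ ‖u - A u‖ * (1 + (b / a ^ 2) * ‖u‖ ^ 2)) := by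
  constructor
  · intro u
    have h := hA u (u - A u)
    have hinner : ⟪u - A u, u - A u⟫ = ‖u - A u‖ ^ 2 := real_inner_self_eq_norm_sq _
    nlinarith [h, mul_nonneg (mul_nonneg hb.le (hBpos u)) (hBpos (u - A u))]
  · intro u
    set w := u - A u with hw
    apply ContinuousLinearMap.opNorm_le_bound
    · have hu : (0:ℝ) ≤ ‖u‖ ^ 2 := by positivity
      have : (0:ℝ) ≤ b / a ^ 2 := by positivity
      positivity
    · intro φ
      have h := hA u φ
      have hCS2 : (B w φ) ^ 2 ≤ ((1 / a) * ‖w‖ * ‖φ‖) ^ 2 := by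
        have h1 := bilin_cs B hBsymm hBpos w φ
        have h2 := hBbound w
        have h3 := hBbound φ
        have h4 := hBpos w
        have h5 := hBpos φ
        have hnw : (0:ℝ) ≤ ‖w‖ := norm_nonneg w
        have hnφ : (0:ℝ) ≤ ‖φ‖ := norm_nonneg φ
        have ha1 : (0:ℝ) < 1 / a := by positivity
        nlinarith [mul_le_mul h2 h3 h5 (by positivity : (0:ℝ) ≤ (1/a) * ‖w‖^2)]
      have hCS : |B w φ| ≤ (1 / a) * ‖w‖ * ‖φ‖ := by
        have := Real.sqrt_le_sqrt hCS2
        rwa [Real.sqrt_sq_eq_abs, Real.sqrt_sq (by positivity)] at this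
      have hinner : |⟪w, φ⟫| ≤ ‖w‖ * ‖φ‖ := abs_real_inner_le_norm w φ
      have hBuu : 0 ≤ B u u := hBpos u
      have hBuu' : B u u ≤ (1 / a) * ‖u‖ ^ 2 := hBbound u
      have hDI : ‖DI u φ‖ = |⟪w, φ⟫ + b * (B u u) * (B w φ)| := by
        rw [← h]; rfl
      rw [hDI]
      have habs : |⟪w, φ⟫ + b * (B u u) * (B w φ)| ≤
          |⟪w, φ⟫| + b * (B u u) * |B w φ| := by
        calc |⟪w, φ⟫ + b * (B u u) * (B w φ)| ≤ |⟪w, φ⟫| + |b * (B u u) * (B w φ)| :=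
              abs_add_le _ _
          _ = |⟪w, φ⟫| + b * (B u u) * |B w φ| := by
              rw [abs_mul, abs_mul, abs_of_nonneg hb.le, abs_of_nonneg hBuu]
      have hBw : 0 ≤ |B w φ| := abs_nonneg _
      have hnw : (0:ℝ) ≤ ‖w‖ := norm_nonneg w
      have hnφ : (0:ℝ) ≤ ‖φ‖ := norm_nonneg φ
      have hnu : (0:ℝ) ≤ ‖u‖ := norm_nonneg u
      have key : b * (B u u) * |B w φ| ≤ b * ((1/a) * ‖u‖^2) * ((1/a) * ‖w‖ * ‖φ‖) := by
        apply mul_le_mul _ hCS hBw (by positivity)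
        nlinarith
      calc |⟪w, φ⟫ + b * (B u u) * (B w φ)| ≤ |⟪w, φ⟫| + b * (B u u) * |B w φ| := habs
        _ ≤ ‖w‖ * ‖φ‖ + b * ((1/a) * ‖u‖^2) * ((1/a) * ‖w‖ * ‖φ‖) := by linarith
        _ = ‖w‖ * (1 + (b / a ^ 2) * ‖u‖ ^ 2) * ‖φ‖ := by field_simp
end

section
/- Suppose nonnegative reals x (= ‖u_n‖_E), t₂ (= ‖u_n‖_2), t_p (= ‖u_n‖_p), t_r (= ‖u_n‖_r) satisfy t₂² + t_r^r ≤ C(λ) t_p^p with 2 < p < r, and the interpolation inequality t_p ≤ t₂^θ t_r^{1−θ} where θ ∈ (0,1) is defined by 1/p = θ/2 + (1−θ)/r. Then there exist constants C₁(λ), C₂(λ) > 0 depending only on C(λ), p, r such that C₁(λ) t₂^{2/r} ≤ t_r ≤ C₂(λ) t₂^{2/r}, and consequently t_p^p ≤ C₃(λ) t₂² for some C₃(λ) > 0. -/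
theorem stmt13 (C p r θ : ℝ) (hC : 0 < C) (hp : 2 < p) (hpr : p < r)
    (hθ0 : 0 < θ) (hθ1 : θ < 1)
    (hθ : 1 / p = θ / 2 + (1 - θ) / r) :
    ∃ C₁ > (0:ℝ), ∃ C₂ > (0:ℝ), ∃ C₃ > (0:ℝ),
      ∀ t₂ tp tr : ℝ, 0 ≤ t₂ → 0 ≤ tp → 0 ≤ tr →
        t₂ ^ (2:ℝ) + tr ^ r ≤ C * tp ^ p →
        tp ≤ t₂ ^ θ * tr ^ (1 - θ) →
        (C₁ * t₂ ^ (2 / r) ≤ tr ∧ tr ≤ C₂ * t₂ ^ (2 / r) ∧ tp ^ p ≤ C₃ * t₂ ^ (2:ℝ)) := by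
  have hp0 : (0:ℝ) < p := by linarith
  have hr0 : (0:ℝ) < r := by linarith
  set a := θ * p with ha_def
  set b := (1 - θ) * p with hb_def
  have ha : 0 < a := mul_pos hθ0 hp0
  have hb : 0 < b := mul_pos (by linarith) hp0
  have key : a * r + 2 * b = 2 * r := by
    have hp' : p ≠ 0 := ne_of_gt hp0
    have hr' : r ≠ 0 := ne_of_gt hr0
    field_simp at hθ
    nlinarith [hθ]
  have hba : 2 - a = 2 * b / r := by
    field_simp
    linarith
  have hrb : r - b = r * a / 2 := by
    field_simp
    linarith
  have hrbpos : 0 < r - b := by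
    rw [hrb]; positivity
  have h2apos : 0 < 2 - a := by
    rw [hba]; positivity
  have hexp1 : (2 - a) / b = 2 / r := by
    rw [div_eq_div_iff (ne_of_gt hb) (ne_of_gt hr0)]
    linarith
  have hexp2 : a / (r - b) = 2 / r := by
    rw [div_eq_div_iff (ne_of_gt hrbpos) (ne_of_gt hr0)]
    linarith
  have hsum : a + 2 * b / r = 2 := by
    field_simp
    linarith
  refine ⟨C ^ (-(1/b)), Real.rpow_pos_of_pos hC _, C ^ (1/(r-b)),
    Real.rpow_pos_of_pos hC _, (C ^ (1/(r-b))) ^ b,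
    Real.rpow_pos_of_pos (Real.rpow_pos_of_pos hC _) _, ?_⟩
  intro t₂ tp tr h2 hp' htr hineq hinterp
  by_cases h0 : t₂ = 0
  · subst h0
    have htp : tp = 0 := by
      have : tp ≤ 0 := by
        simpa [Real.zero_rpow (ne_of_gt hθ0)] using hinterp
      linarith
    have htpp : tp ^ p = 0 := by rw [htp]; exact Real.zero_rpow (ne_of_gt hp0)
    have hz : (0:ℝ) ^ (2:ℝ) = 0 := Real.zero_rpow two_ne_zero
    have htrr : tr ^ r = 0 := by
      have h1 : tr ^ r ≤ 0 := by rw [htpp] at hineq; rw [hz] at hineq; linarith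
      have h2 : 0 ≤ tr ^ r := Real.rpow_nonneg htr _
      linarith
    have htr0 : tr = 0 := by
      exact (Real.rpow_eq_zero htr (ne_of_gt hr0)).mp htrr
    subst htr0
    rw [htpp, hz]
    simp [Real.zero_rpow (ne_of_gt (show (0:ℝ) < 2/r by positivity))]
  · have ht2pos : 0 < t₂ := lt_of_le_of_ne h2 (Ne.symm h0)
    by_cases hr0' : tr = 0
    · exfalso
      subst hr0'
      have htp : tp = 0 := by
        have : tp ≤ 0 := by
          simpa [Real.zero_rpow (ne_of_gt (show (0:ℝ) < 1 - θ by linarith))] using hinterp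
        linarith
      have htpp : tp ^ p = 0 := by rw [htp]; exact Real.zero_rpow (ne_of_gt hp0)
      have := Real.rpow_pos_of_pos ht2pos (2:ℝ)
      have hz : (0:ℝ) ^ r = 0 := Real.zero_rpow (ne_of_gt hr0)
      rw [htpp, hz] at hineq
      linarith
    · have htrpos : 0 < tr := lt_of_le_of_ne htr (Ne.symm hr0')
      have htp_le : tp ^ p ≤ t₂ ^ a * tr ^ b := by
        calc tp ^ p ≤ (t₂ ^ θ * tr ^ (1 - θ)) ^ p :=
              Real.rpow_le_rpow hp' hinterp hp0.le
          _ = t₂ ^ a * tr ^ b := by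
              rw [Real.mul_rpow (Real.rpow_nonneg h2 _) (Real.rpow_nonneg htr _),
                ← Real.rpow_mul h2, ← Real.rpow_mul htr]
      have h2le : t₂ ^ (2:ℝ) ≤ C * (t₂ ^ a * tr ^ b) := by
        have h1 : t₂ ^ (2:ℝ) ≤ C * tp ^ p := by
          have := Real.rpow_nonneg htr r
          linarith
        calc t₂ ^ (2:ℝ) ≤ C * tp ^ p := h1
          _ ≤ C * (t₂ ^ a * tr ^ b) := by
              exact mul_le_mul_of_nonneg_left htp_le hC.le
      have hrle : tr ^ r ≤ C * (t₂ ^ a * tr ^ b) := by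
        have h1 : tr ^ r ≤ C * tp ^ p := by
          have := Real.rpow_nonneg h2 (2:ℝ)
          linarith
        calc tr ^ r ≤ C * tp ^ p := h1
          _ ≤ C * (t₂ ^ a * tr ^ b) := mul_le_mul_of_nonneg_left htp_le hC.le
      -- lower bound
      have key1 : t₂ ^ (2 - a) ≤ C * tr ^ b := by
        rw [Real.rpow_sub ht2pos, div_le_iff₀ (Real.rpow_pos_of_pos ht2pos a)]
        calc t₂ ^ (2:ℝ) ≤ C * (t₂ ^ a * tr ^ b) := h2le
          _ = C * tr ^ b * t₂ ^ a := by ring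
      have lower : C ^ (-(1/b)) * t₂ ^ (2/r) ≤ tr := by
        have step : (t₂ ^ (2 - a)) ^ (1/b) ≤ (C * tr ^ b) ^ (1/b) :=
          Real.rpow_le_rpow (Real.rpow_nonneg h2 _) key1 (by positivity)
        rw [← Real.rpow_mul h2,
          Real.mul_rpow hC.le (Real.rpow_nonneg htr _),
          ← Real.rpow_mul htr, mul_one_div, mul_one_div, div_self (ne_of_gt hb),
          Real.rpow_one, hexp1] at step
        calc C ^ (-(1/b)) * t₂ ^ (2/r)
            ≤ C ^ (-(1/b)) * (C ^ (1/b) * tr) :=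
              mul_le_mul_of_nonneg_left step (Real.rpow_nonneg hC.le _)
          _ = (C ^ (-(1/b)) * C ^ (1/b)) * tr := by ring
          _ = tr := by
              rw [← Real.rpow_add hC, neg_add_cancel, Real.rpow_zero, one_mul]
      -- upper bound
      have key2 : tr ^ (r - b) ≤ C * t₂ ^ a := by
        rw [Real.rpow_sub htrpos, div_le_iff₀ (Real.rpow_pos_of_pos htrpos b)]
        calc tr ^ r ≤ C * (t₂ ^ a * tr ^ b) := hrle
          _ = C * t₂ ^ a * tr ^ b := by ring
      have upper : tr ≤ C ^ (1/(r-b)) * t₂ ^ (2/r) := by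
        have step : (tr ^ (r - b)) ^ (1/(r-b)) ≤ (C * t₂ ^ a) ^ (1/(r-b)) :=
          Real.rpow_le_rpow (Real.rpow_nonneg htr _) key2 (by positivity)
        rw [← Real.rpow_mul htr, mul_one_div, div_self (ne_of_gt hrbpos),
          Real.rpow_one,
          Real.mul_rpow hC.le (Real.rpow_nonneg h2 _),
          ← Real.rpow_mul h2, mul_one_div, hexp2] at step
        exact step
      refine ⟨lower, upper, ?_⟩
      -- third
      have htrb : tr ^ b ≤ (C ^ (1/(r-b)) * t₂ ^ (2/r)) ^ b :=
        Real.rpow_le_rpow htr upper hb.le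
      have hrw : (C ^ (1/(r-b)) * t₂ ^ (2/r)) ^ b
          = (C ^ (1/(r-b))) ^ b * t₂ ^ (2*b/r) := by
        rw [Real.mul_rpow (Real.rpow_nonneg hC.le _) (Real.rpow_nonneg h2 _),
          ← Real.rpow_mul h2]
        congr 1
        ring_nf
      calc tp ^ p ≤ t₂ ^ a * tr ^ b := htp_le
        _ ≤ t₂ ^ a * ((C ^ (1/(r-b))) ^ b * t₂ ^ (2*b/r)) := by
            rw [← hrw]
            exact mul_le_mul_of_nonneg_left htrb (Real.rpow_nonneg h2 _)
        _ = (C ^ (1/(r-b))) ^ b * (t₂ ^ a * t₂ ^ (2*b/r)) := by ring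
        _ = (C ^ (1/(r-b))) ^ b * t₂ ^ (2:ℝ) := by
            rw [← Real.rpow_add ht2pos, hsum]
end
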